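/- Let (X, d) be a metric space and T : X → X a homeomorphism. Suppose there exists an increasing sequence (q_n) of positive integers with gcd(q_n, q_{n+1}) = 1 for all n, such that sup_{t < q_{n+1}} sup_{x ∈ X} d(x, T^{t q_n} x) → 0 as n → ∞. Then T is the identity map. -/

import Mathlib

open Function Filter

/-- Fact 3.5: if a homeomorphism `T` of a metric space satisfies the very strong
rigidity condition `sup_{t < q_{n+1}} sup_x d(x, T^{t qₙ} x) → 0` along an
increasing sequence `(qₙ)` of positive integers with consecutive terms coprime,
then `T` is the identity map. -/
theorem strong_rigidity_forces_identity {X : Type*} [MetricSpace X]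
    (T : X ≃ₜ X) (q : ℕ → ℕ) (hpos : ∀ n, 0 < q n) (hmono : StrictMono q)
    (hcop : ∀ n, Nat.gcd (q n) (q (n + 1)) = 1)
    (hrig : ∀ ε : ℝ, 0 < ε → ∃ N : ℕ, ∀ n ≥ N, ∀ t < q (n + 1), ∀ x : X,
      dist x ((T : X → X)^[t * q n] x) < ε) :
    ∀ x : X, T x = x := by
  intro x
  have key : ∀ ε : ℝ, 0 < ε → dist x (T x) < ε := by
    intro ε hε
    obtain ⟨N, hN⟩ := hrig (ε / 2) (by linarith)
    set n := N
    -- find a < q (n+1) with a * q n % q (n+1) = 1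
    have h1 : 1 < q (n + 1) := lt_of_le_of_lt (hpos n) (hmono (Nat.lt_succ_self n))
    obtain ⟨m, -, hm⟩ := Nat.exists_mul_mod_eq_one_of_coprime (hcop n) h1
    set a := m % q (n + 1) with ha
    have haq : a * q n % q (n + 1) = 1 := by
      rw [ha, Nat.mod_mul_mod, Nat.mul_comm]
      exact hm
    have halt : a < q (n + 1) := Nat.mod_lt _ (by omega)
    set b := a * q n / q (n + 1) with hb
    have hab : a * q n = b * q (n + 1) + 1 := by
      conv_lhs => rw [← Nat.div_add_mod (a * q n) (q (n + 1))]
      rw [haq, hb, Nat.mul_comm]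
    have hblt : b < q (n + 2) := by
      have h2 : b * q (n + 1) < q (n + 1) * q n := by
        calc b * q (n + 1) < a * q n := by omega
        _ ≤ q (n + 1) * q n := Nat.mul_le_mul_right _ (le_of_lt halt)
      have hb2 : b < q n := lt_of_mul_lt_mul_right (by rwa [Nat.mul_comm (q (n+1))] at h2) (Nat.zero_le _)
      exact lt_trans hb2 (hmono (by omega))
    have e1 : dist x ((T : X → X)^[a * q n] x) < ε / 2 := hN n (le_refl n) a halt x
    have e2 : dist (T x) ((T : X → X)^[b * q (n + 1)] (T x)) < ε / 2 :=
      hN (n + 1) (Nat.le_succ n) b hblt (T x)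
    have eiter : (T : X → X)^[a * q n] x = (T : X → X)^[b * q (n + 1)] (T x) := by
      rw [hab, Function.iterate_add_apply, Function.iterate_one]
    calc dist x (T x) ≤ dist x ((T : X → X)^[a * q n] x)
          + dist ((T : X → X)^[a * q n] x) (T x) := dist_triangle _ _ _
      _ < ε / 2 + ε / 2 := by
          refine add_lt_add e1 ?_
          rw [eiter, dist_comm]
          exact e2
      _ = ε := by ring
  have : dist x (T x) ≤ 0 := by
    by_contra h
    push_neg at h
    exact lt_irrefl _ (key _ h)
  have hd : dist x (T x) = 0 := le_antisymm this dist_nonneg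
  exact (dist_eq_zero.mp hd).symm
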